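/- Let 0 ≤ s₀ < s₁, α ∈ (0,1], and let z : [s₀, s₁] → ℝ be α-Hölder continuous with constant K, i.e. |z_t − z_s| ≤ K·|t − s|^α for all s, t ∈ [s₀, s₁]. Let J ⊆ ℝ be an interval containing the range of z, and let b : J → ℝ be Lipschitz with constant L. Then | b(z_{s₁})·(s₁ − s₀) − ∫_{s₀}^{s₁} b(z_s) ds | ≤ L·K·(s₁ − s₀)^{1+α}/(1 + α). -/

import Mathlib

/-- Local truncation error of the right-endpoint quadrature: if `z` is
`α`-Hölder with constant `K` on `[s₀, s₁]` and `b` is `L`-Lipschitz on an interval `J`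
containing the range of `z`, then
`|b(z_{s₁})(s₁ - s₀) - ∫_{s₀}^{s₁} b(z_s) ds| ≤ L K (s₁ - s₀)^{1+α} / (1+α)`. -/
theorem stmt_3 (s₀ s₁ : ℝ) (hs₀ : 0 ≤ s₀) (hs : s₀ < s₁)
    (α : ℝ) (hα0 : 0 < α) (hα1 : α ≤ 1)
    (z : ℝ → ℝ) (K : ℝ) (hK : 0 ≤ K)
    (hHolder : ∀ s ∈ Set.Icc s₀ s₁, ∀ t ∈ Set.Icc s₀ s₁, |z t - z s| ≤ K * |t - s| ^ α)
    (J : Set ℝ) (hJconn : J.OrdConnected) (hJ : ∀ s ∈ Set.Icc s₀ s₁, z s ∈ J)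
    (b : ℝ → ℝ) (L : ℝ) (hL : 0 ≤ L)
    (hLip : ∀ x ∈ J, ∀ y ∈ J, |b x - b y| ≤ L * |x - y|) :
    |b (z s₁) * (s₁ - s₀) - ∫ s in s₀..s₁, b (z s)|
      ≤ L * K * (s₁ - s₀) ^ (1 + α) / (1 + α) := by
  set g : ℝ → ℝ := fun s => b (z s) with hg
  have hgbound : ∀ x ∈ Set.Icc s₀ s₁, ∀ y ∈ Set.Icc s₀ s₁,
      |g x - g y| ≤ (L * K) * |x - y| ^ α := by
    intro x hx y hy
    calc |g x - g y| ≤ L * |z x - z y| := hLip _ (hJ x hx) _ (hJ y hy)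
      _ ≤ L * (K * |x - y| ^ α) := by
          have := hHolder y hy x hx
          nlinarith [abs_nonneg (z x - z y)]
      _ = (L * K) * |x - y| ^ α := by ring
  -- continuity of g on Icc
  have hgcont : ContinuousOn g (Set.Icc s₀ s₁) := by
    have hH : HolderOnWith (L * K).toNNReal α.toNNReal g (Set.Icc s₀ s₁) := by
      intro x hx y hy
      rw [edist_dist, edist_dist, Real.coe_toNNReal α hα0.le]
      show ENNReal.ofReal (dist (g x) (g y))
          ≤ ENNReal.ofReal (L * K) * ENNReal.ofReal (dist x y) ^ α
      rw [ENNReal.ofReal_rpow_of_nonneg dist_nonneg hα0.le,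
        ← ENNReal.ofReal_mul (mul_nonneg hL hK)]
      exact ENNReal.ofReal_le_ofReal (by simpa [Real.dist_eq] using hgbound x hx y hy)
    refine hH.continuousOn ?_
    simp [Real.toNNReal_pos, hα0]
  have hgint : IntervalIntegrable g MeasureTheory.volume s₀ s₁ :=
    (hgcont.mono (by rw [Set.uIcc_of_le hs.le])).intervalIntegrable
  have hconst : b (z s₁) * (s₁ - s₀) = ∫ s in s₀..s₁, b (z s₁) := by
    rw [intervalIntegral.integral_const, smul_eq_mul, mul_comm]
  have hcont2 : IntervalIntegrable (fun s => b (z s₁) - g s) MeasureTheory.volume s₀ s₁ :=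
    (intervalIntegrable_const).sub hgint
  have hdiff : b (z s₁) * (s₁ - s₀) - ∫ s in s₀..s₁, g s
      = ∫ s in s₀..s₁, (b (z s₁) - g s) := by
    rw [intervalIntegral.integral_sub intervalIntegrable_const hgint, hconst]
  rw [hdiff]
  -- the majorant
  have hmajint : IntervalIntegrable (fun s => (L * K) * (s₁ - s) ^ α)
      MeasureTheory.volume s₀ s₁ := by
    apply ContinuousOn.intervalIntegrable
    apply ContinuousOn.mul continuousOn_const
    apply ContinuousOn.rpow_const (by fun_prop)
    intro x hx
    right; exact hα0.le
  have hmaj : ∀ s ∈ Set.Ioc s₀ s₁, |b (z s₁) - g s| ≤ (L * K) * (s₁ - s) ^ α := by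
    intro s hsm
    have hsI : s ∈ Set.Icc s₀ s₁ := ⟨hsm.1.le, hsm.2⟩
    have := hgbound s₁ ⟨hs.le, le_refl _⟩ s hsI
    have habs : |s₁ - s| = s₁ - s := abs_of_nonneg (by linarith [hsm.2])
    rw [habs] at this
    exact this
  have hmajval : ∫ s in s₀..s₁, (L * K) * (s₁ - s) ^ α
      = L * K * (s₁ - s₀) ^ (1 + α) / (1 + α) := by
    rw [intervalIntegral.integral_const_mul]
    have hcomp : ∫ s in s₀..s₁, (s₁ - s) ^ α = ∫ x in (s₁ - s₁)..(s₁ - s₀), x ^ α := by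
      rw [← intervalIntegral.integral_comp_sub_left (fun x => x ^ α) s₁]
    rw [hcomp]
    simp only [sub_self]
    rw [integral_rpow (Or.inl (by linarith))]
    rw [Real.zero_rpow (by linarith)]
    rw [add_comm α 1]
    ring
  calc |∫ s in s₀..s₁, (b (z s₁) - g s)|
      ≤ |∫ s in s₀..s₁, (L * K) * (s₁ - s) ^ α| := by
        rw [← Real.norm_eq_abs]
        apply intervalIntegral.norm_integral_le_abs_of_norm_le _ hmajint
        rw [Set.uIoc_of_le hs.le]
        filter_upwards [MeasureTheory.ae_restrict_mem measurableSet_Ioc] with t ht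
        simpa [Real.norm_eq_abs] using hmaj t ht
    _ = L * K * (s₁ - s₀) ^ (1 + α) / (1 + α) := by
        have h01 : (0:ℝ) ≤ s₁ - s₀ := by linarith
        rw [hmajval, abs_of_nonneg]
        positivity
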